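/- Let φ = (1+√5)/2. If n and m are nonnegative integers with ⌊nφ⌋ - 2 ≤ ⌊m(φ+1)⌋ ≤ ⌊nφ⌋ - 1, then m = ⌊n/φ⌋. -/

import Mathlib

noncomputable def phi : ℝ := (1 + Real.sqrt 5) / 2

lemma sqrt5_sq : Real.sqrt 5 ^ 2 = 5 := Real.sq_sqrt (by norm_num)

lemma sqrt5_lt : Real.sqrt 5 < 3 := by
  nlinarith [sqrt5_sq, Real.sqrt_nonneg 5]

lemma sqrt5_gt : 2 < Real.sqrt 5 := by
  nlinarith [sqrt5_sq, Real.sqrt_nonneg 5]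

lemma phi_sq : phi ^ 2 = phi + 1 := by
  unfold phi; nlinarith [sqrt5_sq]

lemma phi_lt : phi < 2 := by unfold phi; linarith [sqrt5_lt]

lemma phi_gt : 3/2 < phi := by unfold phi; linarith [sqrt5_gt]

lemma phi_irr : Irrational phi := by
  have h5 : Irrational (Real.sqrt 5) := (by norm_num : Nat.Prime 5).irrational_sqrt
  have : Irrational ((1 : ℚ) + Real.sqrt 5) := h5.ratCast_add 1
  have := this.div_natCast (m := 2) (by norm_num)
  simpa [phi] using this

theorem stmt6 (n m : ℕ)
    (h1 : ⌊(n : ℝ) * phi⌋ - 2 ≤ ⌊(m : ℝ) * (phi + 1)⌋)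
    (h2 : ⌊(m : ℝ) * (phi + 1)⌋ ≤ ⌊(n : ℝ) * phi⌋ - 1) :
    (m : ℤ) = ⌊(n : ℝ) / phi⌋ := by
  have hphi_pos : (0:ℝ) < phi := by linarith [phi_gt]
  have hsq := phi_sq
  -- n ≥ 1
  have hn : 1 ≤ n := by
    by_contra hn0
    push_neg at hn0
    interval_cases n
    rw [show ((0:ℕ):ℝ) * phi = 0 by norm_num] at h2
    simp only [Int.floor_zero] at h2
    have : (0:ℤ) ≤ ⌊(m : ℝ) * (phi + 1)⌋ := by
      apply Int.le_floor.mpr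
      push_cast
      positivity
    omega
  set k : ℤ := ⌊(n : ℝ) * phi⌋ with hk
  have hk_le : (k:ℝ) ≤ (n:ℝ) * phi := Int.floor_le _
  have hk_lt : (k:ℝ) < (n:ℝ) * phi := by
    rcases lt_or_eq_of_le hk_le with h | h
    · exact h
    · exfalso
      have hirr : Irrational ((n:ℝ) * phi) := phi_irr.natCast_mul (by omega)
      exact hirr.ne_int k h.symm
  have hk_ub : (n:ℝ) * phi < (k:ℝ) + 1 := Int.lt_floor_add_one _
  -- m₀ = k - n satisfies the same floor condition
  have hm0r_lb : (n:ℝ) - phi < ((k - n : ℤ) : ℝ) * phi := by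
    push_cast
    nlinarith [hk_lt]
  have hm0r_ub : ((k - n : ℤ) : ℝ) * phi < (n:ℝ) := by
    push_cast
    nlinarith [hk_ub]
  have hf0_lb : k - 2 ≤ ⌊((k - n : ℤ) : ℝ) * (phi + 1)⌋ := by
    apply Int.le_floor.mpr
    push_cast
    push_cast at hm0r_lb
    nlinarith [phi_lt, hk_lt]
  have hf0_ub : ⌊((k - n : ℤ) : ℝ) * (phi + 1)⌋ ≤ k - 1 := by
    have : ((k - n : ℤ) : ℝ) * (phi + 1) < (k : ℝ) := by
      push_cast
      push_cast at hm0r_ub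
      nlinarith [hk_ub]
    have := Int.floor_lt.mpr (by exact_mod_cast this)
    omega
  -- uniqueness: (m : ℤ) = k - n
  have hmeq : (m : ℤ) = k - n := by
    by_contra hne
    rcases lt_or_gt_of_ne hne with hlt | hgt
    · -- m < k - n : then (k-n)(φ+1) ≥ (m+1)(φ+1) ≥ m(φ+1) + 2
      have hle : ((m:ℝ) + 1) ≤ ((k - n : ℤ) : ℝ) := by exact_mod_cast hlt
      have : ⌊(m : ℝ) * (phi + 1)⌋ + 2 ≤ ⌊((k - n : ℤ) : ℝ) * (phi + 1)⌋ := by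
        have h2le : (m : ℝ) * (phi + 1) + 2 ≤ ((k - n : ℤ) : ℝ) * (phi + 1) := by
          nlinarith [phi_gt]
        calc ⌊(m : ℝ) * (phi + 1)⌋ + 2 = ⌊(m : ℝ) * (phi + 1) + 2⌋ := by
              rw [show (2:ℝ) = ((2:ℤ):ℝ) by norm_num, Int.floor_add_intCast]
          _ ≤ ⌊((k - n : ℤ) : ℝ) * (phi + 1)⌋ := Int.floor_le_floor (by exact_mod_cast h2le)
      omega
    · have hle : ((k - n : ℤ) : ℝ) + 1 ≤ (m : ℝ) := by exact_mod_cast hgt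
      have : ⌊((k - n : ℤ) : ℝ) * (phi + 1)⌋ + 2 ≤ ⌊(m : ℝ) * (phi + 1)⌋ := by
        have h2le : ((k - n : ℤ) : ℝ) * (phi + 1) + 2 ≤ (m : ℝ) * (phi + 1) := by
          nlinarith [phi_gt]
        calc ⌊((k - n : ℤ) : ℝ) * (phi + 1)⌋ + 2 = ⌊((k - n : ℤ) : ℝ) * (phi + 1) + 2⌋ := by
              rw [show (2:ℝ) = ((2:ℤ):ℝ) by norm_num, Int.floor_add_intCast]
          _ ≤ ⌊(m : ℝ) * (phi + 1)⌋ := Int.floor_le_floor (by exact_mod_cast h2le)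
      omega
  -- ⌊n/φ⌋ = k - n
  have hdiv : (n : ℝ) / phi = (n : ℝ) * phi - n := by
    field_simp
    nlinarith [hsq]
  rw [hmeq, hdiv]
  rw [show (n:ℝ) * phi - n = (n:ℝ) * phi + (-(n:ℤ) : ℤ) by push_cast; ring]
  rw [Int.floor_add_intCast]
  omega
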